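/- (Lagrangian formulation of the inhomogeneous incompressible capillary Navier–Stokes system.) Let n ≥ 2, T > 0, κ ≥ 0, and let μ, k : ℝ → ℝ be C¹. Let ρ : [0,T] × ℝⁿ → ℝ be C¹ in t and C² in x, u : [0,T] × ℝⁿ → ℝⁿ be C¹ in t and C² in x, and P : [0,T] × ℝⁿ → ℝ be C¹ in x, satisfying on [0,T] × ℝⁿ: ∂ₜρ + u·∇ρ = 0; ρ(∂ₜu + (u·∇)u) − div(μ(ρ) D(u)) + ∇P = −κ div(k(ρ) ∇ρ ⊗ ∇ρ); div u = 0. Let X be a flow of u such that for each t, X(t,·) is a C² diffeomorphism of ℝⁿ with det DₓX(t,·) ≡ 1, let A(t,x) = (DₓX(t,x))⁻¹, and set ρ̄ = ρ(t,X(t,x)), ū = u(t,X(t,x)), P̄ = P(t,X(t,x)), ρ₀ = ρ(0,·). Then for all (t,x) ∈ [0,T] × ℝⁿ: (i) ρ̄(t,x) = ρ₀(x); (ii) ρ₀ ∂ₜū − div[ μ(ρ₀) A D_A(ū) ] + ᵗA ∇P̄ = −κ div[ k(ρ₀) A ( ᵗA ∇ρ₀ ) ⊗ ( ᵗA ∇ρ₀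 ) ]; (iii) div( A ū ) = 0, where all spatial differential operators act in the variable x. -/

import Mathlib

open scoped BigOperators
open MeasureTheory

/-- Partial derivative `∂ᵢ f` of a scalar function at a point `x`. -/
noncomputable def pd {n : ℕ} (i : Fin n) (f : (Fin n → ℝ) → ℝ) (x : Fin n → ℝ) : ℝ :=
  fderiv ℝ f x (Pi.single i 1)

/-- Gradient of a scalar function. -/
noncomputable def grad {n : ℕ} (f : (Fin n → ℝ) → ℝ) (x : Fin n → ℝ) : Fin n → ℝ :=
  fun i => pd i f x

/-- Laplacian of a scalar function. -/
noncomputable def lap {n : ℕ} (f : (Fin n → ℝ) → ℝ) (x : Fin n → ℝ) : ℝ :=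
  ∑ i, pd i (pd i f) x

/-- Squared euclidean norm of the gradient, `|∇f|² = ∑ᵢ (∂ᵢf)²`. -/
noncomputable def gradNormSq {n : ℕ} (f : (Fin n → ℝ) → ℝ) (x : Fin n → ℝ) : ℝ :=
  ∑ i, (pd i f x) ^ 2

/-- Divergence of a matrix-valued field: `(matDiv M x)ᵢ = ∑ⱼ ∂ⱼ Mⱼᵢ`. -/
noncomputable def matDiv {n : ℕ} (M : (Fin n → ℝ) → Matrix (Fin n) (Fin n) ℝ)
    (x : Fin n → ℝ) : Fin n → ℝ :=
  fun i => ∑ j, pd j (fun y => M y j i) x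

/-- Divergence of a vector field: `vecDiv F x = ∑ᵢ ∂ᵢ Fᵢ`. -/
noncomputable def vecDiv {n : ℕ} (F : (Fin n → ℝ) → (Fin n → ℝ)) (x : Fin n → ℝ) : ℝ :=
  ∑ i, pd i (fun y => F y i) x

/-- Jacobian matrix of a vector field: `(jacM F x)ᵢⱼ = ∂ⱼ Fᵢ`. -/
noncomputable def jacM {n : ℕ} (F : (Fin n → ℝ) → (Fin n → ℝ)) (x : Fin n → ℝ) :
    Matrix (Fin n) (Fin n) ℝ :=
  Matrix.of fun i j => pd j (fun y => F y i) x

/-- The matrix field `A = (DX)⁻¹` associated with a change of variables `X`. -/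
noncomputable def Amat {n : ℕ} (X : (Fin n → ℝ) → (Fin n → ℝ)) (y : Fin n → ℝ) :
    Matrix (Fin n) (Fin n) ℝ :=
  (jacM X y)⁻¹

/-- Twisted deformation tensor `D_A(z) = Dz·A + ᵗA·ᵗ(Dz)`. -/
noncomputable def DAdef {n : ℕ} (A : (Fin n → ℝ) → Matrix (Fin n) (Fin n) ℝ)
    (z : (Fin n → ℝ) → (Fin n → ℝ)) (y : Fin n → ℝ) : Matrix (Fin n) (Fin n) ℝ :=
  jacM z y * A y + Matrix.transpose (A y) * Matrix.transpose (jacM z y)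

/-- The Lagrangian gradient vector `ᵗA ∇ρ₀`. -/
noncomputable def tAgrad {n : ℕ} (X : (Fin n → ℝ) → (Fin n → ℝ))
    (ρ₀ : (Fin n → ℝ) → ℝ) (y : Fin n → ℝ) : Fin n → ℝ :=
  Matrix.mulVec (Matrix.transpose (Amat X y)) (fun a => pd a ρ₀ y)

section Helpers
variable {n : ℕ}

lemma pd_hasFDerivAt {f : (Fin n → ℝ) → ℝ} {f' : (Fin n → ℝ) →L[ℝ] ℝ} {x : Fin n → ℝ}
    (h : HasFDerivAt f f' x) (i : Fin n) : pd i f x = f' (Pi.single i 1) := by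
  rw [pd, h.fderiv]

lemma pd_const {x : Fin n → ℝ} (i : Fin n) (c : ℝ) : pd i (fun _ => c) x = 0 := by
  rw [pd_hasFDerivAt (hasFDerivAt_const c x) i]; rfl

lemma pd_congr {f g : (Fin n → ℝ) → ℝ} (h : f = g) (i : Fin n) (x : Fin n → ℝ) :
    pd i f x = pd i g x := by rw [h]

lemma pd_mul {f g : (Fin n → ℝ) → ℝ} {x : Fin n → ℝ} (hf : DifferentiableAt ℝ f x)
    (hg : DifferentiableAt ℝ g x) (i : Fin n) :
    pd i (fun y => f y * g y) x = pd i f x * g x + f x * pd i g x := by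
  rw [pd_hasFDerivAt (hf.hasFDerivAt.fun_mul hg.hasFDerivAt) i]
  simp only [pd, ContinuousLinearMap.add_apply, ContinuousLinearMap.smul_apply, smul_eq_mul]
  ring

lemma pd_sum {ι : Type*} (s : Finset ι) {f : ι → (Fin n → ℝ) → ℝ} {x : Fin n → ℝ}
    (hf : ∀ a ∈ s, DifferentiableAt ℝ (f a) x) (i : Fin n) :
    pd i (fun y => ∑ a ∈ s, f a y) x = ∑ a ∈ s, pd i (f a) x := by
  rw [pd_hasFDerivAt (HasFDerivAt.fun_sum (fun a ha => (hf a ha).hasFDerivAt)) i]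
  simp [pd]

lemma fderiv_apply_eq_sum {f : (Fin n → ℝ) → ℝ} {x : Fin n → ℝ}
    (hf : DifferentiableAt ℝ f x) (v : Fin n → ℝ) :
    fderiv ℝ f x v = ∑ a, v a * pd a f x := by
  conv_lhs => rw [pi_eq_sum_univ v, map_sum]
  refine Finset.sum_congr rfl fun a _ => ?_
  rw [_root_.map_smul]
  rw [pd, smul_eq_mul]
  congr 2
  funext j
  simp [Pi.single_apply, eq_comm]

lemma pd_comp {f : (Fin n → ℝ) → ℝ} {g : (Fin n → ℝ) → (Fin n → ℝ)} {x : Fin n → ℝ}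
    (hf : DifferentiableAt ℝ f (g x)) (hg : ∀ a, DifferentiableAt ℝ (fun y => g y a) x)
    (j : Fin n) :
    pd j (fun y => f (g y)) x = ∑ a, pd a f (g x) * pd j (fun y => g y a) x := by
  have hg' : DifferentiableAt ℝ g x := differentiableAt_pi.2 hg
  have hcomp : HasFDerivAt (fun y => f (g y)) ((fderiv ℝ f (g x)).comp (fderiv ℝ g x)) x :=
    hf.hasFDerivAt.comp x hg'.hasFDerivAt
  rw [pd_hasFDerivAt hcomp j]
  rw [ContinuousLinearMap.comp_apply]
  rw [fderiv_apply_eq_sum hf]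
  have hgp : fderiv ℝ g x = ContinuousLinearMap.pi fun a => fderiv ℝ (fun y => g y a) x :=
    fderiv_pi hg
  refine Finset.sum_congr rfl fun a _ => ?_
  rw [hgp, mul_comm]
  rfl


lemma contDiff_pd {f : (Fin n → ℝ) → ℝ} (hf : ContDiff ℝ 2 f) (q : Fin n) :
    ContDiff ℝ 1 (fun y => pd q f y) := by
  have h1 : ContDiff ℝ 1 (fderiv ℝ f) := hf.fderiv_right (by norm_num)
  have h2 := (ContinuousLinearMap.apply ℝ ℝ (Pi.single q (1:ℝ))).contDiff.comp h1
  exact h2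

lemma pd_fderiv_apply {f : (Fin n → ℝ) → ℝ} {f'' : (Fin n → ℝ) →L[ℝ] (Fin n → ℝ) →L[ℝ] ℝ}
    {x : Fin n → ℝ} (hx : HasFDerivAt (fderiv ℝ f) f'' x) (i : Fin n) (v : Fin n → ℝ) :
    pd i (fun y => fderiv ℝ f y v) x = f'' (Pi.single i 1) v := by
  have hc : HasFDerivAt (fun y => fderiv ℝ f y v)
      ((ContinuousLinearMap.apply ℝ ℝ v).comp f'') x :=
    (ContinuousLinearMap.apply ℝ ℝ v).hasFDerivAt.comp x hx
  rw [pd_hasFDerivAt hc]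
  rfl

lemma pd_pd_symm {f : (Fin n → ℝ) → ℝ} (hf : ContDiff ℝ 2 f) (i j : Fin n) (x : Fin n → ℝ) :
    pd i (pd j f) x = pd j (pd i f) x := by
  have hd : ∀ y, HasFDerivAt f (fderiv ℝ f y) y := fun y =>
    (hf.differentiable (by norm_num) y).hasFDerivAt
  have h1 : ContDiff ℝ 1 (fderiv ℝ f) := hf.fderiv_right (by norm_num)
  have hx : HasFDerivAt (fderiv ℝ f) (fderiv ℝ (fderiv ℝ f) x) x :=
    (h1.differentiable one_ne_zero x).hasFDerivAt
  have hsymm := second_derivative_symmetric hd hx (Pi.single i 1) (Pi.single j 1)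
  show pd i (fun y => fderiv ℝ f y (Pi.single j 1)) x
      = pd j (fun y => fderiv ℝ f y (Pi.single i 1)) x
  rw [pd_fderiv_apply hx i (Pi.single j 1), pd_fderiv_apply hx j (Pi.single i 1)]
  exact hsymm

lemma contDiff_det {m : ℕ∞} {M : (Fin n → ℝ) → Matrix (Fin n) (Fin n) ℝ}
    (h : ∀ p q, ContDiff ℝ m (fun y => M y p q)) :
    ContDiff ℝ m (fun y => (M y).det) := by
  have : (fun y => (M y).det)
      = fun y => ∑ σ : Equiv.Perm (Fin n), ((Equiv.Perm.sign σ : ℤ) : ℝ) * ∏ i, M y (σ i) i := by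
    funext y; rw [Matrix.det_apply']
  rw [this]
  refine ContDiff.sum fun σ _ => ContDiff.mul contDiff_const ?_
  classical
  induction (Finset.univ : Finset (Fin n)) using Finset.induction_on with
  | empty => simpa using contDiff_const
  | insert a s hnot ih =>
    simp only [Finset.prod_insert hnot]
    exact (h _ _).mul ih

lemma det_row_linear (N : Matrix (Fin n) (Fin n) ℝ) (p : Fin n) (v : Fin n → ℝ) :
    (N.updateRow p v).det = ∑ q, v q * N.adjugate q p := by
  classical
  let L : (Fin n → ℝ) →ₗ[ℝ] ℝ :=
    { toFun := fun w => (N.updateRow p w).det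
      map_add' := fun w1 w2 => Matrix.det_updateRow_add N p w1 w2
      map_smul' := fun s w => by simpa using Matrix.det_updateRow_smul N p s w }
  have hv : v = ∑ q, v q • (Pi.single q (1:ℝ) : Fin n → ℝ) := by
    funext a
    simp [Pi.single_apply]
  have step : (N.updateRow p v).det = L v := rfl
  rw [step]
  conv_lhs => rw [hv]
  rw [map_sum]
  refine Finset.sum_congr rfl fun q _ => ?_
  rw [_root_.map_smul, smul_eq_mul]
  congr 1
  show (N.updateRow p (Pi.single q 1)).det = N.adjugate q p
  rw [Matrix.adjugate_apply]

lemma det_alg (N H : Matrix (Fin n) (Fin n) ℝ) :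
    ∑ σ : Equiv.Perm (Fin n), ((Equiv.Perm.sign σ : ℤ) : ℝ) *
        ∑ i, (∏ i' ∈ Finset.univ.erase i, N (σ i') i') * H (σ i) i
      = ∑ p, ∑ q, N.adjugate q p * H p q := by
  classical
  have key : ∀ p, ∑ q, N.adjugate q p * H p q
      = ∑ σ : Equiv.Perm (Fin n), ((Equiv.Perm.sign σ : ℤ) : ℝ) *
          (H p (σ⁻¹ p) * ∏ i' ∈ Finset.univ.erase (σ⁻¹ p), N (σ i') i') := by
    intro p
    have h1 : ∑ q, N.adjugate q p * H p q = (N.updateRow p (H p)).det := by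
      rw [det_row_linear N p (H p)]
      exact Finset.sum_congr rfl fun q _ => mul_comm _ _
    rw [h1, Matrix.det_apply']
    refine Finset.sum_congr rfl fun σ _ => ?_
    congr 1
    have hprod : ∏ i, N.updateRow p (H p) (σ i) i
        = N.updateRow p (H p) (σ (σ⁻¹ p)) (σ⁻¹ p)
          * ∏ i' ∈ Finset.univ.erase (σ⁻¹ p), N.updateRow p (H p) (σ i') i' := by
      rw [← Finset.mul_prod_erase Finset.univ _ (Finset.mem_univ (σ⁻¹ p))]
    rw [hprod]
    congr 1
    · rw [Equiv.Perm.inv_def, Equiv.apply_symm_apply, Matrix.updateRow_self]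
    · refine Finset.prod_congr rfl fun i hi => ?_
      have hne : σ i ≠ p := by
        intro hc
        have : i = σ⁻¹ p := by rw [← hc, Equiv.Perm.inv_def, Equiv.symm_apply_apply]
        exact (Finset.mem_erase.1 hi).1 this
      rw [Matrix.updateRow_ne hne]
  have h2 : ∑ p, ∑ q, N.adjugate q p * H p q
      = ∑ σ : Equiv.Perm (Fin n), ((Equiv.Perm.sign σ : ℤ) : ℝ) *
          ∑ p, H p (σ⁻¹ p) * ∏ i' ∈ Finset.univ.erase (σ⁻¹ p), N (σ i') i' := by
    calc ∑ p, ∑ q, N.adjugate q p * H p q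
        = ∑ p, ∑ σ : Equiv.Perm (Fin n), ((Equiv.Perm.sign σ : ℤ) : ℝ) *
            (H p (σ⁻¹ p) * ∏ i' ∈ Finset.univ.erase (σ⁻¹ p), N (σ i') i') :=
          Finset.sum_congr rfl fun p _ => key p
      _ = ∑ σ : Equiv.Perm (Fin n), ∑ p, ((Equiv.Perm.sign σ : ℤ) : ℝ) *
            (H p (σ⁻¹ p) * ∏ i' ∈ Finset.univ.erase (σ⁻¹ p), N (σ i') i') := Finset.sum_comm
      _ = _ := by simp [Finset.mul_sum]
  rw [h2]
  refine Finset.sum_congr rfl fun σ _ => ?_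
  congr 1
  rw [← Equiv.sum_comp σ (fun p => H p (σ⁻¹ p) * ∏ i' ∈ Finset.univ.erase (σ⁻¹ p), N (σ i') i')]
  refine Finset.sum_congr rfl fun i _ => ?_
  rw [Equiv.Perm.inv_def, Equiv.symm_apply_apply, mul_comm]

lemma pd_det {F : (Fin n → ℝ) → Matrix (Fin n) (Fin n) ℝ} {x : Fin n → ℝ}
    (hF : ∀ p q, DifferentiableAt ℝ (fun y => F y p q) x) (j : Fin n) :
    pd j (fun y => (F y).det) x
      = ∑ p, ∑ q, (F x).adjugate q p * pd j (fun y => F y p q) x := by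
  classical
  have hfun : (fun y => (F y).det)
      = fun y => ∑ σ : Equiv.Perm (Fin n), ((Equiv.Perm.sign σ : ℤ) : ℝ) * ∏ i, F y (σ i) i := by
    funext y; rw [Matrix.det_apply']
  have hprod : ∀ σ : Equiv.Perm (Fin n), HasFDerivAt (fun y => ∏ i, F y (σ i) i)
      (∑ i, (∏ i' ∈ Finset.univ.erase i, F x (σ i') i') •
        fderiv ℝ (fun y => F y (σ i) i) x) x := by
    intro σ
    exact HasFDerivAt.finset_prod (fun i _ => (hF (σ i) i).hasFDerivAt)
  have hder : HasFDerivAt (fun y => (F y).det)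
      (∑ σ : Equiv.Perm (Fin n), ((Equiv.Perm.sign σ : ℤ) : ℝ) •
        ∑ i, (∏ i' ∈ Finset.univ.erase i, F x (σ i') i') •
          fderiv ℝ (fun y => F y (σ i) i) x) x := by
    rw [hfun]
    exact HasFDerivAt.fun_sum fun σ _ => (hprod σ).const_mul _
  rw [pd_hasFDerivAt hder j]
  have halg := det_alg (F x) (Matrix.of fun p q => pd j (fun y => F y p q) x)
  simp only [Matrix.of_apply] at halg
  rw [← halg]
  simp only [ContinuousLinearMap.coe_sum', Finset.sum_apply, ContinuousLinearMap.coe_smul',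
    Pi.smul_apply, smul_eq_mul]
  
  simp only [pd]

lemma tri_swap {f : Fin n → Fin n → Fin n → ℝ} :
    ∑ j, ∑ p, ∑ q, f j p q = ∑ q, ∑ p, ∑ j, f j p q := by
  calc ∑ j, ∑ p, ∑ q, f j p q
      = ∑ j, ∑ q, ∑ p, f j p q := Finset.sum_congr rfl fun _ _ => Finset.sum_comm
    _ = ∑ q, ∑ j, ∑ p, f j p q := Finset.sum_comm
    _ = ∑ q, ∑ p, ∑ j, f j p q := Finset.sum_congr rfl fun _ _ => Finset.sum_comm

section Flow
variable {Y : (Fin n → ℝ) → (Fin n → ℝ)}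

lemma amat_eq_adj (hdet : ∀ y, (jacM Y y).det = 1) (y : Fin n → ℝ) : Amat Y y = (jacM Y y).adjugate := by
  rw [Amat, Matrix.inv_def, hdet y, Ring.inverse_one, one_smul]

lemma contDiff_jac_entry (hY : ContDiff ℝ 2 Y) (p q : Fin n) : ContDiff ℝ 1 (fun y => jacM Y y p q) :=
  contDiff_pd (contDiff_pi.1 hY p) q

lemma contDiff_amat (hY : ContDiff ℝ 2 Y) (hdet : ∀ y, (jacM Y y).det = 1) (a b : Fin n) : ContDiff ℝ 1 (fun y => Amat Y y a b) := by
  have h : (fun y => Amat Y y a b)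
      = fun y => ((jacM Y y).updateRow b (Pi.single a 1)).det := by
    funext y
    rw [amat_eq_adj hdet, Matrix.adjugate_apply]
  rw [h]
  apply contDiff_det
  intro p q
  by_cases hpb : p = b
  · subst hpb
    simp only [Matrix.updateRow_self]
    exact contDiff_const
  · simp only [Matrix.updateRow_ne hpb]
    exact contDiff_jac_entry hY p q

lemma hFA (hdet : ∀ y, (jacM Y y).det = 1) (y : Fin n → ℝ) : jacM Y y * Amat Y y = 1 :=
  Matrix.mul_nonsing_inv _ (by rw [hdet]; exact isUnit_one)

lemma hAF (hdet : ∀ y, (jacM Y y).det = 1) (y : Fin n → ℝ) : Amat Y y * jacM Y y = 1 :=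
  Matrix.nonsing_inv_mul _ (by rw [hdet]; exact isUnit_one)

lemma piola (hY : ContDiff ℝ 2 Y) (hdet : ∀ y, (jacM Y y).det = 1) (a : Fin n) (x : Fin n → ℝ) :
    ∑ j, pd j (fun y => Amat Y y j a) x = 0 := by
  classical
  have hAd : ∀ q b y₀, DifferentiableAt ℝ (fun y => Amat Y y q b) y₀ := fun q b y₀ =>
    (contDiff_amat hY hdet q b).differentiable one_ne_zero y₀
  have hFd : ∀ p q y₀, DifferentiableAt ℝ (fun y => jacM Y y p q) y₀ := fun p q y₀ =>
    (contDiff_jac_entry hY p q).differentiable one_ne_zero y₀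
  have star : ∀ p j, ∑ q, (pd j (fun y => jacM Y y p q) x * Amat Y x q a
      + jacM Y x p q * pd j (fun y => Amat Y y q a) x) = 0 := by
    intro p j
    have hconst : (fun y => ∑ q, jacM Y y p q * Amat Y y q a)
        = fun _ => (1 : Matrix (Fin n) (Fin n) ℝ) p a := by
      funext y
      rw [← Matrix.mul_apply, hFA hdet]
    have h0 := pd_sum (Finset.univ)
      (f := fun q y => jacM Y y p q * Amat Y y q a) (x := x)
      (fun q _ => ((hFd p q x).mul (hAd q a x))) j
    rw [hconst, pd_const] at h0
    calc ∑ q, (pd j (fun y => jacM Y y p q) x * Amat Y x q a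
          + jacM Y x p q * pd j (fun y => Amat Y y q a) x)
        = ∑ q, pd j (fun y => jacM Y y p q * Amat Y y q a) x :=
          Finset.sum_congr rfl fun q _ => (pd_mul (hFd p q x) (hAd q a x) j).symm
      _ = 0 := h0.symm
  have estep : ∀ p j, ∑ q, jacM Y x p q * pd j (fun y => Amat Y y q a) x
      = -∑ q, pd j (fun y => jacM Y y p q) x * Amat Y x q a := by
    intro p j
    have h0 := star p j
    rw [Finset.sum_add_distrib] at h0
    linarith
  have recov : ∀ j, pd j (fun y => Amat Y y j a) x
      = -∑ p, Amat Y x j p * ∑ q, pd j (fun y => jacM Y y p q) x * Amat Y x q a := by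
    intro j
    have h1 : ∑ p, Amat Y x j p * ∑ q, jacM Y x p q * pd j (fun y => Amat Y y q a) x
        = pd j (fun y => Amat Y y j a) x := by
      calc ∑ p, Amat Y x j p * ∑ q, jacM Y x p q * pd j (fun y => Amat Y y q a) x
          = ∑ p, ∑ q, Amat Y x j p * (jacM Y x p q * pd j (fun y => Amat Y y q a) x) := by
            simp [Finset.mul_sum]
        _ = ∑ q, ∑ p, Amat Y x j p * (jacM Y x p q * pd j (fun y => Amat Y y q a) x) :=
            Finset.sum_comm
        _ = ∑ q, (∑ p, Amat Y x j p * jacM Y x p q) * pd j (fun y => Amat Y y q a) x := by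
            refine Finset.sum_congr rfl fun q _ => ?_
            rw [Finset.sum_mul]
            exact Finset.sum_congr rfl fun p _ => (mul_assoc _ _ _).symm
        _ = ∑ q, ((Amat Y x * jacM Y x) j q) * pd j (fun y => Amat Y y q a) x := by
            simp [Matrix.mul_apply]
        _ = ∑ q, ((1 : Matrix (Fin n) (Fin n) ℝ) j q) * pd j (fun y => Amat Y y q a) x := by
            rw [hAF hdet]
        _ = pd j (fun y => Amat Y y j a) x := by
            simp [Matrix.one_apply]
    rw [← h1]
    rw [← Finset.sum_neg_distrib]
    refine Finset.sum_congr rfl fun p _ => ?_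
    rw [estep p j, mul_neg]
  have hsym : ∀ p q j, pd j (fun y => jacM Y y p q) x = pd q (fun y => jacM Y y p j) x := by
    intro p q j
    exact pd_pd_symm (contDiff_pi.1 hY p) j q x
  have jacobi0 : ∀ j, ∑ p, ∑ q, Amat Y x q p * pd j (fun y => jacM Y y p q) x = 0 := by
    intro j
    have hpd := pd_det (F := fun y => jacM Y y) (fun p q => hFd p q x) j
    have hconst : (fun y => (jacM Y y).det) = fun _ => (1:ℝ) := funext fun y => hdet y
    rw [hconst, pd_const] at hpd
    rw [← amat_eq_adj hdet] at hpd
    exact hpd.symm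
  calc ∑ j, pd j (fun y => Amat Y y j a) x
      = ∑ j, -∑ p, Amat Y x j p * ∑ q, pd j (fun y => jacM Y y p q) x * Amat Y x q a := by
        exact Finset.sum_congr rfl fun j _ => recov j
    _ = -∑ j, ∑ p, ∑ q, Amat Y x j p * (pd q (fun y => jacM Y y p j) x * Amat Y x q a) := by
        rw [← Finset.sum_neg_distrib]
        refine Finset.sum_congr rfl fun j _ => ?_
        congr 1
        refine Finset.sum_congr rfl fun p _ => ?_
        rw [Finset.mul_sum]
        refine Finset.sum_congr rfl fun q _ => ?_
        rw [hsym p q j]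
    _ = -∑ j, ∑ p, ∑ q, Amat Y x q p * (pd j (fun y => jacM Y y p q) x * Amat Y x j a) := by
        congr 1
        rw [tri_swap]
    _ = -∑ j, (∑ p, ∑ q, Amat Y x q p * pd j (fun y => jacM Y y p q) x) * Amat Y x j a := by
        congr 1
        refine Finset.sum_congr rfl fun j _ => ?_
        simp [Finset.sum_mul, mul_assoc]
    _ = 0 := by
        simp only [jacobi0, zero_mul, Finset.sum_const_zero, neg_zero]

end Flow

lemma pd_comp_jac {Y : (Fin n → ℝ) → (Fin n → ℝ)} (hY : ContDiff ℝ 2 Y)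
    {f : (Fin n → ℝ) → ℝ} {x : Fin n → ℝ} (hf : DifferentiableAt ℝ f (Y x)) (j : Fin n) :
    pd j (fun y => f (Y y)) x = ∑ b, pd b f (Y x) * jacM Y x b j := by
  exact pd_comp hf (fun b => ((contDiff_pi.1 hY b).differentiable (by norm_num)).differentiableAt) j

lemma contract_pressure {Y : (Fin n → ℝ) → (Fin n → ℝ)} (hY : ContDiff ℝ 2 Y)
    (hdet : ∀ y, (jacM Y y).det = 1)
    {f : (Fin n → ℝ) → ℝ} {x : Fin n → ℝ} (hf : DifferentiableAt ℝ f (Y x)) (i : Fin n) :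
    ∑ j, Amat Y x j i * pd j (fun y => f (Y y)) x = pd i f (Y x) := by
  calc ∑ j, Amat Y x j i * pd j (fun y => f (Y y)) x
      = ∑ j, ∑ b, pd b f (Y x) * (jacM Y x b j * Amat Y x j i) := by
        refine Finset.sum_congr rfl fun j _ => ?_
        rw [pd_comp_jac hY hf j, Finset.mul_sum]
        refine Finset.sum_congr rfl fun b _ => by ring
    _ = ∑ b, pd b f (Y x) * ∑ j, jacM Y x b j * Amat Y x j i := by
        rw [Finset.sum_comm]
        exact Finset.sum_congr rfl fun b _ => by rw [Finset.mul_sum]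
    _ = ∑ b, pd b f (Y x) * (1 : Matrix (Fin n) (Fin n) ℝ) b i := by
        refine Finset.sum_congr rfl fun b _ => ?_
        rw [← Matrix.mul_apply, hFA hdet]
    _ = pd i f (Y x) := by simp [Matrix.one_apply]

lemma piola_div {Y : (Fin n → ℝ) → (Fin n → ℝ)} (hY : ContDiff ℝ 2 Y)
    (hdet : ∀ y, (jacM Y y).det = 1)
    (w : Fin n → (Fin n → ℝ) → ℝ) (hw : ∀ a, ContDiff ℝ 1 (w a)) (x : Fin n → ℝ) :
    ∑ j, pd j (fun y => ∑ a, Amat Y y j a * w a (Y y)) x = ∑ a, pd a (w a) (Y x) := by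
  classical
  have hYd : ∀ y₀, DifferentiableAt ℝ Y y₀ := fun y₀ =>
    (hY.differentiable (by norm_num)).differentiableAt
  have hwY : ∀ a (y₀ : Fin n → ℝ), DifferentiableAt ℝ (fun y => w a (Y y)) y₀ := fun a y₀ =>
    (((hw a).differentiable one_ne_zero).differentiableAt).comp y₀ (hYd y₀)
  have hAd : ∀ q b (y₀ : Fin n → ℝ), DifferentiableAt ℝ (fun y => Amat Y y q b) y₀ :=
    fun q b y₀ => ((contDiff_amat hY hdet q b).differentiable one_ne_zero).differentiableAt
  have expand : ∀ j, pd j (fun y => ∑ a, Amat Y y j a * w a (Y y)) x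
      = ∑ a, (pd j (fun y => Amat Y y j a) x * w a (Y x)
          + Amat Y x j a * pd j (fun y => w a (Y y)) x) := by
    intro j
    rw [pd_sum Finset.univ (fun a _ => (hAd j a x).fun_mul (hwY a x)) j]
    exact Finset.sum_congr rfl fun a _ => pd_mul (hAd j a x) (hwY a x) j
  calc ∑ j, pd j (fun y => ∑ a, Amat Y y j a * w a (Y y)) x
      = ∑ j, ∑ a, (pd j (fun y => Amat Y y j a) x * w a (Y x)
          + Amat Y x j a * pd j (fun y => w a (Y y)) x) :=
        Finset.sum_congr rfl fun j _ => expand j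
    _ = ∑ a, ∑ j, (pd j (fun y => Amat Y y j a) x * w a (Y x)
          + Amat Y x j a * pd j (fun y => w a (Y y)) x) := Finset.sum_comm
    _ = ∑ a, ((∑ j, pd j (fun y => Amat Y y j a) x) * w a (Y x)
          + ∑ j, Amat Y x j a * pd j (fun y => w a (Y y)) x) := by
        refine Finset.sum_congr rfl fun a _ => ?_
        rw [Finset.sum_add_distrib, Finset.sum_mul]
    _ = ∑ a, ∑ j, Amat Y x j a * pd j (fun y => w a (Y y)) x := by
        refine Finset.sum_congr rfl fun a _ => ?_
        rw [piola hY hdet a x, zero_mul, zero_add]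
    _ = ∑ a, pd a (w a) (Y x) := by
        refine Finset.sum_congr rfl fun a _ => ?_
        exact contract_pressure hY hdet (((hw a).differentiable one_ne_zero).differentiableAt) a

lemma joint_pd_right {f : ℝ × (Fin n → ℝ) → ℝ} (hf : ContDiff ℝ 1 f) (t : ℝ)
    (z : Fin n → ℝ) (j : Fin n) :
    pd j (fun y => f (t, y)) z = fderiv ℝ f (t, z) (0, Pi.single j 1) := by
  have hc : HasFDerivAt (fun y : Fin n → ℝ => f (t, y))
      ((fderiv ℝ f (t, z)).comp (ContinuousLinearMap.inr ℝ ℝ (Fin n → ℝ))) z :=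
    ((hf.differentiable one_ne_zero).differentiableAt.hasFDerivAt).comp z
      (hasFDerivAt_prodMk_right t z)
  rw [pd_hasFDerivAt hc]
  rfl

lemma joint_fderiv_eq {T : ℝ} (hT : 0 < T) {f : ℝ × (Fin n → ℝ) → ℝ} (hf : ContDiff ℝ 1 f)
    {t : ℝ} (ht : t ∈ Set.Icc (0:ℝ) T) (z : Fin n → ℝ) (v : Fin n → ℝ) :
    fderiv ℝ f (t, z) (1, v)
      = derivWithin (fun s => f (s, z)) (Set.Icc 0 T) t
        + ∑ j, v j * pd j (fun y => f (t, y)) z := by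
  have hda : HasDerivAt (fun s => f (s, z)) (fderiv ℝ f (t, z) (1, 0)) t := by
    have hφ : HasDerivAt (fun s : ℝ => (s, z)) ((1 : ℝ), (0 : Fin n → ℝ)) t :=
      (hasDerivAt_id t).prodMk (hasDerivAt_const t z)
    exact ((hf.differentiable one_ne_zero).differentiableAt.hasFDerivAt).comp_hasDerivAt t hφ
  have hdw : derivWithin (fun s => f (s, z)) (Set.Icc 0 T) t = fderiv ℝ f (t, z) (1, 0) :=
    hda.hasDerivWithinAt.derivWithin ((uniqueDiffOn_Icc hT) t ht)
  have h1 : (∑ j, v j • ((0:ℝ), (Pi.single j 1 : Fin n → ℝ))) = ((0:ℝ), v) := by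
    rw [Prod.ext_iff]
    constructor
    · rw [Prod.fst_sum]
      simp
    · rw [Prod.snd_sum]
      simp only [Prod.smul_mk, Prod.snd]
      funext a
      rw [Finset.sum_apply]
      simp [Pi.single_apply, eq_comm]
  have hsplit : ((1 : ℝ), v) = ((1 : ℝ), (0 : Fin n → ℝ))
      + ∑ j, v j • ((0 : ℝ), (Pi.single j 1 : Fin n → ℝ)) := by
    rw [h1]
    simp
  rw [hsplit, map_add, map_sum, hdw]
  congr 1
  refine Finset.sum_congr rfl fun j _ => ?_
  rw [_root_.map_smul, smul_eq_mul, joint_pd_right hf t z j]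

lemma deriv_along_flow {T : ℝ} (hT : 0 < T) {f : ℝ × (Fin n → ℝ) → ℝ} (hf : ContDiff ℝ 1 f)
    {X : ℝ → (Fin n → ℝ) → (Fin n → ℝ)} {x : Fin n → ℝ} {t : ℝ} {v : Fin n → ℝ}
    (ht : t ∈ Set.Icc (0:ℝ) T)
    (hflow : HasDerivWithinAt (fun s => X s x) v (Set.Icc 0 T) t) :
    HasDerivWithinAt (fun s => f (s, X s x)) (fderiv ℝ f (t, X t x) (1, v))
      (Set.Icc 0 T) t := by
  have hφ : HasDerivWithinAt (fun s : ℝ => (s, X s x)) ((1 : ℝ), v) (Set.Icc 0 T) t :=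
    (hasDerivWithinAt_id t _).prodMk hflow
  exact ((hf.differentiable one_ne_zero).differentiableAt.hasFDerivAt).comp_hasDerivWithinAt t hφ

lemma jac_comp {Y : (Fin n → ℝ) → (Fin n → ℝ)} (hY : ContDiff ℝ 2 Y)
    {g : (Fin n → ℝ) → (Fin n → ℝ)} (hg : ContDiff ℝ 2 g) (y : Fin n → ℝ) :
    jacM (fun z' => g (Y z')) y = jacM g (Y y) * jacM Y y := by
  funext a b
  show pd b (fun z' => g (Y z') a) y = _
  have h1 : pd b (fun z' => g (Y z') a) y
      = ∑ c, pd c (fun q => g q a) (Y y) * jacM Y y c b := by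
    exact pd_comp ((contDiff_pi.1 hg a).differentiable (by norm_num)).differentiableAt
      (fun c => ((contDiff_pi.1 hY c).differentiable (by norm_num)).differentiableAt) b
  rw [h1, Matrix.mul_apply]
  rfl

lemma DA_entry {Y : (Fin n → ℝ) → (Fin n → ℝ)} (hY : ContDiff ℝ 2 Y)
    (hdet : ∀ y, (jacM Y y).det = 1)
    {g : (Fin n → ℝ) → (Fin n → ℝ)} (hg : ContDiff ℝ 2 g) (y : Fin n → ℝ) (a i : Fin n) :
    DAdef (fun z' => Amat Y z') (fun z' => g (Y z')) y a i
      = pd i (fun q => g q a) (Y y) + pd a (fun q => g q i) (Y y) := by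
  have hmain : jacM (fun z' => g (Y z')) y * Amat Y y = jacM g (Y y) := by
    rw [jac_comp hY hg y, Matrix.mul_assoc, hFA hdet, Matrix.mul_one]
  rw [DAdef, Matrix.add_apply]
  congr 1
  · rw [hmain]
    rfl
  · rw [← Matrix.transpose_mul, hmain]
    rfl

lemma tAgrad_eq {Y : (Fin n → ℝ) → (Fin n → ℝ)} (hY : ContDiff ℝ 2 Y)
    (hdet : ∀ y, (jacM Y y).det = 1)
    {r0 rt : (Fin n → ℝ) → ℝ} (hrel : ∀ y, r0 y = rt (Y y)) (hrt : ContDiff ℝ 2 rt)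
    (y : Fin n → ℝ) (a : Fin n) :
    tAgrad Y r0 y a = pd a rt (Y y) := by
  have h0 : tAgrad Y r0 y a = ∑ b, Amat Y y b a * pd b r0 y := by
    rw [tAgrad, Matrix.mulVec]
    simp [dotProduct, Matrix.transpose_apply]
  rw [h0]
  have h1 : ∀ b, pd b r0 y = pd b (fun q => rt (Y q)) y := by
    intro b
    apply pd_congr
    funext q
    exact hrel q
  calc ∑ b, Amat Y y b a * pd b r0 y
      = ∑ b, Amat Y y b a * pd b (fun q => rt (Y q)) y :=
        Finset.sum_congr rfl fun b _ => by rw [h1 b]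
    _ = pd a rt (Y y) := contract_pressure hY hdet
        ((hrt.differentiable (by norm_num)).differentiableAt) a


end Helpers

/-- Lagrangian formulation of the inhomogeneous incompressible
capillary Navier–Stokes system: if `(ρ,u,P)` solves
`∂ₜρ + u·∇ρ = 0`,
`ρ(∂ₜu + (u·∇)u) − div(μ(ρ)D(u)) + ∇P = −κ div(k(ρ)∇ρ⊗∇ρ)`, `div u = 0`
on `[0,T]×ℝⁿ` and `X` is a flow of `u` consisting of measure-preserving C²
diffeomorphisms (`det DₓX ≡ 1`), then with `A = (DₓX)⁻¹`, `ū = u∘X`, `P̄ = P∘X`,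
`ρ₀ = ρ(0,·)`:
(i) `ρ(t,X(t,x)) = ρ₀(x)`;
(ii) `ρ₀ ∂ₜū − div[μ(ρ₀) A D_A(ū)] + ᵗA∇P̄ = −κ div[k(ρ₀) A (ᵗA∇ρ₀)⊗(ᵗA∇ρ₀)]`;
(iii) `div(A ū) = 0`. -/
theorem lagrangian_formulation_capillary_NS {n : ℕ} (hn : 2 ≤ n)
    (T κ : ℝ) (hT : 0 < T) (hκ : 0 ≤ κ)
    (μ k : ℝ → ℝ) (hμ : ContDiff ℝ 1 μ) (hk : ContDiff ℝ 1 k)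
    (ρ P : ℝ → (Fin n → ℝ) → ℝ)
    (u X : ℝ → (Fin n → ℝ) → (Fin n → ℝ))
    (hρ_joint : ContDiff ℝ 1 (fun p : ℝ × (Fin n → ℝ) => ρ p.1 p.2))
    (hρx : ∀ t, ContDiff ℝ 2 (ρ t))
    (hu_joint : ContDiff ℝ 1 (fun p : ℝ × (Fin n → ℝ) => u p.1 p.2))
    (hux : ∀ t, ContDiff ℝ 2 (u t))
    (hP : ∀ t, ContDiff ℝ 1 (P t))
    (htransport : ∀ t ∈ Set.Icc (0 : ℝ) T, ∀ x : Fin n → ℝ,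
      derivWithin (fun s => ρ s x) (Set.Icc 0 T) t
        + ∑ i, u t x i * pd i (ρ t) x = 0)
    (hmomentum : ∀ t ∈ Set.Icc (0 : ℝ) T, ∀ x : Fin n → ℝ, ∀ i : Fin n,
      ρ t x * (derivWithin (fun s => u s x i) (Set.Icc 0 T) t
            + ∑ j, u t x j * pd j (fun y => u t y i) x)
        - ∑ j, pd j (fun y => μ (ρ t y) *
            (pd j (fun z => u t z i) y + pd i (fun z => u t z j) y)) x
        + pd i (P t) x
      = - κ * ∑ j, pd j (fun y => k (ρ t y) * pd j (ρ t) y * pd i (ρ t) y) x)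
    (hdivfree : ∀ t ∈ Set.Icc (0 : ℝ) T, ∀ x : Fin n → ℝ,
      ∑ i, pd i (fun y => u t y i) x = 0)
    (hX0 : ∀ x, X 0 x = x)
    (hXflow : ∀ t ∈ Set.Icc (0 : ℝ) T, ∀ x,
      HasDerivWithinAt (fun s => X s x) (u t (X t x)) (Set.Icc 0 T) t)
    (hXreg : ∀ t ∈ Set.Icc (0 : ℝ) T, ContDiff ℝ 2 (X t))
    (hXbij : ∀ t ∈ Set.Icc (0 : ℝ) T, Function.Bijective (X t))
    (hXdet : ∀ t ∈ Set.Icc (0 : ℝ) T, ∀ x, (jacM (X t) x).det = 1)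
    (t : ℝ) (ht : t ∈ Set.Icc (0 : ℝ) T) (x : Fin n → ℝ) :
    (ρ t (X t x) = ρ 0 x)
    ∧ (∀ i : Fin n,
        ρ 0 x * derivWithin (fun s => u s (X s x) i) (Set.Icc 0 T) t
          - (∑ j, pd j (fun y => μ (ρ 0 y) *
              (Amat (X t) y *
                DAdef (fun z => Amat (X t) z) (fun z => u t (X t z)) y) j i) x)
          + (∑ j, Amat (X t) x j i * pd j (fun y => P t (X t y)) x)
        = - κ * ∑ j, pd j (fun y => k (ρ 0 y) *
            (Amat (X t) y *
              Matrix.vecMulVec (tAgrad (X t) (ρ 0) y) (tAgrad (X t) (ρ 0) y)) j i) x)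
    ∧ (∑ i, pd i (fun y => ∑ j, Amat (X t) y i j * u t (X t y) j) x = 0) := by
  have hY : ContDiff ℝ 2 (X t) := hXreg t ht
  have hdetY : ∀ y, (jacM (X t) y).det = 1 := hXdet t ht
  -- Part (i), general version
  have hpart1 : ∀ s ∈ Set.Icc (0 : ℝ) T, ∀ y, ρ s (X s y) = ρ 0 y := by
    intro s hs y
    have hder : ∀ τ ∈ Set.Icc (0:ℝ) T,
        HasDerivWithinAt (fun r => (fun p : ℝ × (Fin n → ℝ) => ρ p.1 p.2) (r, X r y))
        (fderiv ℝ (fun p : ℝ × (Fin n → ℝ) => ρ p.1 p.2) (τ, X τ y) (1, u τ (X τ y)))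
        (Set.Icc 0 T) τ :=
      fun τ hτ => deriv_along_flow hT hρ_joint hτ (hXflow τ hτ y)
    have hzero : ∀ τ ∈ Set.Icc (0:ℝ) T,
        fderiv ℝ (fun p : ℝ × (Fin n → ℝ) => ρ p.1 p.2) (τ, X τ y) (1, u τ (X τ y)) = 0 := by
      intro τ hτ
      rw [joint_fderiv_eq hT hρ_joint hτ (X τ y) (u τ (X τ y))]
      exact htransport τ hτ (X τ y)
    have h0T : (0:ℝ) ∈ Set.Icc (0:ℝ) T := Set.mem_Icc.2 ⟨le_refl 0, le_of_lt hT⟩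
    have hb := Convex.norm_image_sub_le_of_norm_hasDerivWithin_le
      (C := 0) hder (fun τ hτ => by rw [hzero τ hτ]; simp) (convex_Icc 0 T) h0T hs
    rw [zero_mul] at hb
    have heq : ρ s (X s y) = ρ 0 (X 0 y) := by
      have h2 := le_antisymm hb (norm_nonneg _)
      rwa [norm_eq_zero, sub_eq_zero] at h2
    rw [hX0 y] at heq
    exact heq
  have hbar : ∀ y, ρ 0 y = ρ t (X t y) := fun y => (hpart1 t ht y).symm
  refine ⟨hpart1 t ht x, ?_, ?_⟩
  · -- Part (ii)
    intro i
    -- time derivative along the flow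
    have htime : derivWithin (fun s => u s (X s x) i) (Set.Icc 0 T) t
        = derivWithin (fun s => u s (X t x) i) (Set.Icc 0 T) t
          + ∑ j, u t (X t x) j * pd j (fun y => u t y i) (X t x) := by
      have hf : ContDiff ℝ 1 (fun p : ℝ × (Fin n → ℝ) => u p.1 p.2 i) :=
        contDiff_pi.1 hu_joint i
      have h1 := (deriv_along_flow hT hf ht (hXflow t ht x)).derivWithin
        ((uniqueDiffOn_Icc hT) t ht)
      rw [joint_fderiv_eq hT hf ht (X t x) (u t (X t x))] at h1
      exact h1
    -- pressure
    have hpres : ∑ j, Amat (X t) x j i * pd j (fun y => P t (X t y)) x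
        = pd i (P t) (X t x) :=
      contract_pressure hY hdetY (((hP t).differentiable one_ne_zero).differentiableAt) i
    -- viscous term
    have hwv : ∀ a : Fin n, ContDiff ℝ 1 (fun z' => μ (ρ t z') *
        (pd a (fun q => u t q i) z' + pd i (fun q => u t q a) z')) := fun a =>
      (hμ.comp ((hρx t).of_le one_le_two)).mul
        ((contDiff_pd (contDiff_pi.1 (hux t) i) a).add
          (contDiff_pd (contDiff_pi.1 (hux t) a) i))
    have hviscfun : ∀ j : Fin n, (fun y => μ (ρ 0 y) *
          (Amat (X t) y * DAdef (fun z => Amat (X t) z) (fun z => u t (X t z)) y) j i)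
        = fun y => ∑ a, Amat (X t) y j a * ((fun z' => μ (ρ t z') *
            (pd a (fun q => u t q i) z' + pd i (fun q => u t q a) z')) (X t y)) := by
      intro j
      funext y
      rw [hbar y, Matrix.mul_apply, Finset.mul_sum]
      refine Finset.sum_congr rfl fun a _ => ?_
      rw [DA_entry hY hdetY (hux t) y a i]
      ring
    have hvisc : ∑ j, pd j (fun y => μ (ρ 0 y) *
          (Amat (X t) y * DAdef (fun z => Amat (X t) z) (fun z => u t (X t z)) y) j i) x
        = ∑ a, pd a (fun z' => μ (ρ t z') *
            (pd a (fun q => u t q i) z' + pd i (fun q => u t q a) z')) (X t x) := by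
      calc ∑ j, pd j (fun y => μ (ρ 0 y) *
            (Amat (X t) y * DAdef (fun z => Amat (X t) z) (fun z => u t (X t z)) y) j i) x
          = ∑ j, pd j (fun y => ∑ a, Amat (X t) y j a * ((fun z' => μ (ρ t z') *
              (pd a (fun q => u t q i) z' + pd i (fun q => u t q a) z')) (X t y))) x :=
            Finset.sum_congr rfl fun j _ => pd_congr (hviscfun j) j x
        _ = _ := piola_div hY hdetY _ hwv x
    -- capillary term
    have hwc : ∀ a : Fin n, ContDiff ℝ 1 (fun z' =>
        k (ρ t z') * pd a (ρ t) z' * pd i (ρ t) z') := fun a =>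
      ((hk.comp ((hρx t).of_le one_le_two)).mul (contDiff_pd (hρx t) a)).mul
        (contDiff_pd (hρx t) i)
    have hcapfun : ∀ j : Fin n, (fun y => k (ρ 0 y) *
          (Amat (X t) y * Matrix.vecMulVec (tAgrad (X t) (ρ 0) y)
            (tAgrad (X t) (ρ 0) y)) j i)
        = fun y => ∑ a, Amat (X t) y j a * ((fun z' =>
            k (ρ t z') * pd a (ρ t) z' * pd i (ρ t) z') (X t y)) := by
      intro j
      funext y
      rw [hbar y, Matrix.mul_apply, Finset.mul_sum]
      refine Finset.sum_congr rfl fun a _ => ?_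
      rw [Matrix.vecMulVec_apply, tAgrad_eq hY hdetY hbar (hρx t) y a,
        tAgrad_eq hY hdetY hbar (hρx t) y i]
      ring
    have hcap : ∑ j, pd j (fun y => k (ρ 0 y) *
          (Amat (X t) y * Matrix.vecMulVec (tAgrad (X t) (ρ 0) y)
            (tAgrad (X t) (ρ 0) y)) j i) x
        = ∑ a, pd a (fun z' => k (ρ t z') * pd a (ρ t) z' * pd i (ρ t) z') (X t x) := by
      calc ∑ j, pd j (fun y => k (ρ 0 y) *
            (Amat (X t) y * Matrix.vecMulVec (tAgrad (X t) (ρ 0) y)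
              (tAgrad (X t) (ρ 0) y)) j i) x
          = ∑ j, pd j (fun y => ∑ a, Amat (X t) y j a * ((fun z' =>
              k (ρ t z') * pd a (ρ t) z' * pd i (ρ t) z') (X t y))) x :=
            Finset.sum_congr rfl fun j _ => pd_congr (hcapfun j) j x
        _ = _ := piola_div hY hdetY _ hwc x
    rw [htime, hvisc, hpres, hcap, hbar x]
    exact hmomentum t ht (X t x) i
  · -- Part (iii)
    exact (piola_div hY hdetY (fun j z' => u t z' j)
      (fun j => (contDiff_pi.1 (hux t) j).of_le one_le_two) x).trans
      (hdivfree t ht (X t x))
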